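/- Slow variation of the neural tangent kernel from the hierarchy (abstract form of Corollary 2.2): let n ≥ 1, T > 0, B ≥ 0, C₀ ≥ 0, y ∈ ℝⁿ, and let f : [0,T] → ℝⁿ satisfy (1/n) ∑_{β} (f_β(t) − y_β)² ≤ C₀ for all t ∈ [0,T]. Let K² : [0,T] → ((Fin n)² → ℝ), K³ : [0,T] → ((Fin n)³ → ℝ) and K⁴ : [0,T] → ((Fin n)⁴ → ℝ) be differentiable in t and satisfy, for all indices and all t: d/dt K²(t)(α₁,α₂) = −(1/n) ∑_{β} K³(t)(α₁,α₂,β)(f_β(t) − y_β) and d/dt K³(t)(α₁,α₂,α₃) = −(1/n) ∑_{β} K⁴(t)(α₁,α₂,α₃,β)(f_β(t) − y_β). If max over indices |K³(0)(α₁,α₂,α₃)| ≤ B and max over indices |K⁴(t)(α₁,α₂,α₃,α₄)| ≤ B for all t ∈ [0,T], then for every t ∈ [0,T] and all α₁, α₂, one has |d/dt K²(t)(α₁,α₂)| ≤ B √C₀ (1 + √C₀ t). -/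

import Mathlib

lemma aux13 (n : ℕ) (hn : 1 ≤ n) (M C₀ : ℝ) (hM : 0 ≤ M) (hC₀ : 0 ≤ C₀)
    (a e : Fin n → ℝ) (ha : ∀ β, |a β| ≤ M)
    (he : (1 / n : ℝ) * ∑ β, e β ^ 2 ≤ C₀) :
    |(1 / n : ℝ) * ∑ β, a β * e β| ≤ M * Real.sqrt C₀ := by
  have hn0 : (0:ℝ) < n := by exact_mod_cast hn
  have h1 : |(1 / n : ℝ) * ∑ β, a β * e β| ≤ (1/n) * ∑ β, M * |e β| := by
    rw [abs_mul, abs_of_nonneg (by positivity : (0:ℝ) ≤ 1/(n:ℝ))]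
    gcongr
    calc |∑ β, a β * e β| ≤ ∑ β, |a β * e β| := Finset.abs_sum_le_sum_abs _ _
      _ ≤ ∑ β, M * |e β| := by
        apply Finset.sum_le_sum; intro i _
        rw [abs_mul]; exact mul_le_mul_of_nonneg_right (ha i) (abs_nonneg _)
  have h2 : (1/n : ℝ) * ∑ β, |e β| ≤ Real.sqrt C₀ := by
    rw [show Real.sqrt C₀ = Real.sqrt C₀ from rfl,
      ← Real.sqrt_sq (by positivity : (0:ℝ) ≤ (1/(n:ℝ)) * ∑ β, |e β|)]
    apply Real.sqrt_le_sqrt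
    have hcs := Finset.sum_mul_sq_le_sq_mul_sq Finset.univ (fun _ : Fin n => (1:ℝ))
      (fun β => |e β|)
    simp only [one_mul, one_pow, Finset.sum_const, Finset.card_univ, Fintype.card_fin,
      nsmul_eq_mul, sq_abs, mul_one] at hcs
    have : ((1/n : ℝ) * ∑ β, |e β|) ^ 2 = (∑ β, |e β|) ^ 2 / n^2 := by
      field_simp
    rw [this]
    calc (∑ β, |e β|) ^ 2 / (n:ℝ)^2 ≤ ((n:ℝ) * ∑ β, e β ^ 2) / n^2 := by gcongr
      _ = (1/n) * ∑ β, e β ^ 2 := by field_simp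
      _ ≤ C₀ := he
  calc |(1 / n : ℝ) * ∑ β, a β * e β| ≤ (1/n) * ∑ β, M * |e β| := h1
    _ = M * ((1/n) * ∑ β, |e β|) := by rw [← Finset.mul_sum]; ring
    _ ≤ M * Real.sqrt C₀ := mul_le_mul_of_nonneg_left h2 hM

/-- Slow variation of the neural tangent kernel from the hierarchy
(abstract form of Corollary 2.2): if `(1/n) ∑_β (f_β(t) - y_β)² ≤ C₀` on `[0,T]`, the
kernels satisfy the hierarchy ODEs
`d/dt K²(t) = -(1/n) ∑_β K³(t)(·,·,β)(f_β - y_β)` and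
`d/dt K³(t) = -(1/n) ∑_β K⁴(t)(·,·,·,β)(f_β - y_β)`, `|K³(0)| ≤ B` entrywise, and
`|K⁴(t)| ≤ B` entrywise on `[0,T]`, then `|d/dt K²(t)| ≤ B √C₀ (1 + √C₀ t)` on `[0,T]`. -/
theorem stmt_13 (n : ℕ) (hn : 1 ≤ n) (T B C₀ : ℝ)
    (hT : 0 < T) (hB : 0 ≤ B) (hC₀ : 0 ≤ C₀)
    (y : Fin n → ℝ) (f : ℝ → Fin n → ℝ)
    (hf : ∀ t ∈ Set.Icc (0 : ℝ) T, (1 / n) * ∑ β, (f t β - y β) ^ 2 ≤ C₀)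
    (K2 : ℝ → Fin n → Fin n → ℝ)
    (K3 : ℝ → Fin n → Fin n → Fin n → ℝ)
    (K4 : ℝ → Fin n → Fin n → Fin n → Fin n → ℝ)
    (dK2 : ℝ → Fin n → Fin n → ℝ)
    (hK2deriv : ∀ t ∈ Set.Icc (0 : ℝ) T, ∀ α₁ α₂,
      HasDerivWithinAt (fun s => K2 s α₁ α₂) (dK2 t α₁ α₂) (Set.Icc 0 T) t)
    (hdK2 : ∀ t ∈ Set.Icc (0 : ℝ) T, ∀ α₁ α₂,
      dK2 t α₁ α₂ = -(1 / n) * ∑ β, K3 t α₁ α₂ β * (f t β - y β))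
    (hK3deriv : ∀ t ∈ Set.Icc (0 : ℝ) T, ∀ α₁ α₂ α₃,
      HasDerivWithinAt (fun s => K3 s α₁ α₂ α₃)
        (-(1 / n) * ∑ β, K4 t α₁ α₂ α₃ β * (f t β - y β)) (Set.Icc 0 T) t)
    (hK30 : ∀ α₁ α₂ α₃, |K3 0 α₁ α₂ α₃| ≤ B)
    (hK4 : ∀ t ∈ Set.Icc (0 : ℝ) T, ∀ α₁ α₂ α₃ α₄, |K4 t α₁ α₂ α₃ α₄| ≤ B) :
    ∀ t ∈ Set.Icc (0 : ℝ) T, ∀ α₁ α₂,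
      |dK2 t α₁ α₂| ≤ B * Real.sqrt C₀ * (1 + Real.sqrt C₀ * t) := by
  intro t ht α₁ α₂
  have hsq : 0 ≤ Real.sqrt C₀ := Real.sqrt_nonneg _
  have ht0 : 0 ≤ t := ht.1
  -- bound the derivative of K3 on [0,T]
  have hderivbound : ∀ α₁ α₂ α₃, ∀ x ∈ Set.Icc (0:ℝ) T,
      ‖-(1 / (n:ℝ)) * ∑ β, K4 x α₁ α₂ α₃ β * (f x β - y β)‖ ≤ B * Real.sqrt C₀ := by
    intro a₁ a₂ a₃ x hx
    rw [Real.norm_eq_abs, neg_mul, abs_neg]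
    exact aux13 n hn B C₀ hB hC₀ _ _ (fun β => hK4 x hx a₁ a₂ a₃ β) (hf x hx)
  -- bound K3 at time t
  have hK3t : ∀ α₁ α₂ α₃, |K3 t α₁ α₂ α₃| ≤ B + B * Real.sqrt C₀ * t := by
    intro a₁ a₂ a₃
    have h0T : (0:ℝ) ∈ Set.Icc (0:ℝ) T := ⟨le_rfl, hT.le⟩
    have := (convex_Icc (0:ℝ) T).norm_image_sub_le_of_norm_hasDerivWithin_le
      (f := fun s => K3 s a₁ a₂ a₃)
      (f' := fun x => -(1 / (n:ℝ)) * ∑ β, K4 x a₁ a₂ a₃ β * (f x β - y β))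
      (fun x hx => hK3deriv x hx a₁ a₂ a₃)
      (fun x hx => hderivbound a₁ a₂ a₃ x hx) h0T ht
    rw [Real.norm_eq_abs, sub_zero, Real.norm_eq_abs, abs_of_nonneg ht0] at this
    calc |K3 t a₁ a₂ a₃| = |K3 0 a₁ a₂ a₃ + (K3 t a₁ a₂ a₃ - K3 0 a₁ a₂ a₃)| := by ring_nf
      _ ≤ |K3 0 a₁ a₂ a₃| + |K3 t a₁ a₂ a₃ - K3 0 a₁ a₂ a₃| := abs_add_le _ _
      _ ≤ B + B * Real.sqrt C₀ * t := add_le_add (hK30 a₁ a₂ a₃) this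
  rw [hdK2 t ht α₁ α₂, neg_mul, abs_neg]
  calc |(1 / (n:ℝ)) * ∑ β, K3 t α₁ α₂ β * (f t β - y β)|
      ≤ (B + B * Real.sqrt C₀ * t) * Real.sqrt C₀ :=
        aux13 n hn _ C₀ (by positivity) hC₀ _ _ (fun β => hK3t α₁ α₂ β) (hf t ht)
    _ = B * Real.sqrt C₀ * (1 + Real.sqrt C₀ * t) := by ring
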